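/- arXiv:1108.2018 — 2 statements merged into one kernel-verified Lean document; each statement's English description precedes it below -/
import Mathlib

section
/- Let u be differentiable with u(0)=0, u > 0 and u' > 0 on (0,∞), and u(x) < x·u'(x) for all x > 0. Then the revenue R(v,s,c) = s + c·u(v-s)/u(c), for 0 < c < v - s, is strictly increasing in v, strictly decreasing in s, and strictly decreasing in c. -/
theorem revenue_monotonicity (u : ℝ → ℝ) (hdiff : Differentiable ℝ u)
    (hu0 : u 0 = 0)
    (hpos : ∀ x : ℝ, 0 < x → 0 < u x)
    (hdpos : ∀ x : ℝ, 0 < x → 0 < deriv u x)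
    (hkey : ∀ x : ℝ, 0 < x → u x < x * deriv u x)
    (R : ℝ → ℝ → ℝ → ℝ)
    (hR : ∀ v s c, R v s c = s + c * u (v - s) / u c) :
    (∀ c s v₁ v₂ : ℝ, 0 < c → c < v₁ - s → v₁ < v₂ → R v₁ s c < R v₂ s c) ∧
    (∀ c s₁ s₂ v : ℝ, 0 < c → c < v - s₂ → s₁ < s₂ → R v s₂ c < R v s₁ c) ∧
    (∀ c₁ c₂ s v : ℝ, 0 < c₁ → c₁ < c₂ → c₂ < v - s → R v s c₂ < R v s c₁) := by
  -- u is strictly monotone on [0, ∞)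
  have hmono : StrictMonoOn u (Set.Ici 0) := by
    apply strictMonoOn_of_deriv_pos (convex_Ici 0) hdiff.continuous.continuousOn
    intro x hx
    rw [interior_Ici] at hx
    exact hdpos x hx
  -- u x / x is strictly monotone on (0, ∞)
  have hslope : StrictMonoOn (fun x => u x / x) (Set.Ioi 0) := by
    apply strictMonoOn_of_deriv_pos (convex_Ioi 0)
    · exact ContinuousOn.div hdiff.continuous.continuousOn continuousOn_id
        (fun x hx => ne_of_gt hx)
    · intro x hx
      rw [interior_Ioi] at hx
      have hd : HasDerivAt (fun x => u x / x)
          ((deriv u x * x - u x * 1) / x ^ 2) x :=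
        ((hdiff x).hasDerivAt).div (hasDerivAt_id x) (ne_of_gt hx)
      rw [hd.deriv]
      have h1 := hkey x hx
      have h2 : 0 < deriv u x * x - u x * 1 := by nlinarith
      exact div_pos h2 (pow_pos hx 2)
  -- c / u c is strictly antitone on (0, ∞)
  have hanti : StrictAntiOn (fun c => c / u c) (Set.Ioi 0) := by
    apply strictAntiOn_of_deriv_neg (convex_Ioi 0)
    · exact ContinuousOn.div continuousOn_id hdiff.continuous.continuousOn
        (fun x hx => ne_of_gt (hpos x hx))
    · intro x hx
      rw [interior_Ioi] at hx
      have hd : HasDerivAt (fun c => c / u c)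
          ((1 * u x - x * deriv u x) / u x ^ 2) x :=
        (hasDerivAt_id x).div ((hdiff x).hasDerivAt) (ne_of_gt (hpos x hx))
      rw [hd.deriv]
      have h1 := hkey x hx
      have h2 := hpos x hx
      apply div_neg_of_neg_of_pos
      · nlinarith
      · positivity
  refine ⟨?_, ?_, ?_⟩
  · -- increasing in v
    intro c s v₁ v₂ hc hcv hv
    have hx1 : (0:ℝ) < v₁ - s := lt_trans hc hcv
    have hx2 : (0:ℝ) < v₂ - s := by linarith
    have huc := hpos c hc
    have hlt : u (v₁ - s) < u (v₂ - s) :=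
      hmono (le_of_lt hx1) (le_of_lt hx2) (by linarith)
    rw [hR, hR]
    have : c * u (v₁ - s) / u c < c * u (v₂ - s) / u c := by gcongr
    linarith
  · -- decreasing in s
    intro c s₁ s₂ v hc hcv hs
    set x₁ := v - s₁ with hx1def
    set x₂ := v - s₂ with hx2def
    have hx2 : c < x₂ := hcv
    have hx12 : x₂ < x₁ := by simp [hx1def, hx2def]; linarith
    have hx2pos : (0:ℝ) < x₂ := lt_trans hc hx2
    have hx1pos : (0:ℝ) < x₁ := lt_trans hx2pos hx12
    have huc := hpos c hc
    obtain ⟨ξ, hξ, hξeq⟩ := exists_hasDerivAt_eq_slope u (deriv u) hx12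
      hdiff.continuous.continuousOn (fun x _ => (hdiff x).hasDerivAt)
    have hξpos : 0 < ξ := lt_trans hx2pos hξ.1
    have hξc : c < ξ := lt_trans hx2 hξ.1
    -- u c / c < deriv u ξ
    have h1 : u c / c < u ξ / ξ := hslope (Set.mem_Ioi.mpr hc) (Set.mem_Ioi.mpr hξpos) hξc
    have h2 : u ξ / ξ < deriv u ξ := by
      rw [div_lt_iff₀ hξpos]
      have := hkey ξ hξpos
      linarith [this]
    have h3 : u c / c < (u x₁ - u x₂) / (x₁ - x₂) := by rw [← hξeq]; linarith
    have key : u c * (x₁ - x₂) < c * (u x₁ - u x₂) := by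
      rw [div_lt_div_iff₀ hc (by linarith : (0:ℝ) < x₁ - x₂)] at h3
      linarith
    have main : c * u x₂ / u c + (x₁ - x₂) < c * u x₁ / u c := by
      rw [div_add' _ _ _ (ne_of_gt huc), div_lt_div_iff₀ huc huc]
      nlinarith [key, huc]
    rw [hR, hR, ← hx1def, ← hx2def]
    have hdiffx : x₁ - x₂ = s₂ - s₁ := by rw [hx1def, hx2def]; ring
    linarith [main]
  · -- decreasing in c
    intro c₁ c₂ s v hc1 hc12 hc2v
    have hc2 : (0:ℝ) < c₂ := lt_trans hc1 hc12
    have hx : (0:ℝ) < v - s := lt_trans hc2 hc2v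
    have hux := hpos (v - s) hx
    have hlt : c₂ / u c₂ < c₁ / u c₁ :=
      hanti (Set.mem_Ioi.mpr hc1) (Set.mem_Ioi.mpr hc2) hc12
    rw [hR, hR]
    have e1 : c₂ * u (v - s) / u c₂ = (c₂ / u c₂) * u (v - s) := by ring
    have e2 : c₁ * u (v - s) / u c₁ = (c₁ / u c₁) * u (v - s) := by ring
    rw [e1, e2]
    nlinarith [mul_lt_mul_of_pos_right hlt hux]
end

section
/- For ρ₁ < ρ₂ < 0 and 0 < c < v - s, the revenue s + c·u_ρ(v-s)/u_ρ(c) with u_ρ(x) = (1-e^{-ρx})/ρ is strictly larger at ρ = ρ₁ than at ρ = ρ₂; i.e., the seller's revenue is strictly decreasing in the risk-loving coefficient ρ. -/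
open Real Set

theorem revenue_decreasing_in_rho (ρ₁ ρ₂ : ℝ) (h12 : ρ₁ < ρ₂) (h2 : ρ₂ < 0)
    (c s v : ℝ) (hc : 0 < c) (hcv : c < v - s)
    (u : ℝ → ℝ → ℝ) (hu : ∀ ρ x, u ρ x = (1 - Real.exp (-ρ * x)) / ρ) :
    s + c * u ρ₂ (v - s) / u ρ₂ c < s + c * u ρ₁ (v - s) / u ρ₁ c := by
  set r : ℝ := (v - s) / c with hr_def
  have hr : 1 < r := (one_lt_div hc).2 hcv
  -- key rewriting of the ratio
  have key : ∀ ρ : ℝ, ρ < 0 →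
      u ρ (v - s) / u ρ c = ((Real.exp (-ρ * c)) ^ r - 1) / (Real.exp (-ρ * c) - 1) := by
    intro ρ hρ
    have hρne : ρ ≠ 0 := ne_of_lt hρ
    have hy1 : 1 < Real.exp (-ρ * c) := by
      have h : 0 < -ρ * c := mul_pos (by linarith) hc
      calc (1:ℝ) = Real.exp 0 := by simp
      _ < _ := Real.exp_lt_exp.2 h
    have hyne : Real.exp (-ρ * c) - 1 ≠ 0 := by linarith
    have hpow : Real.exp (-ρ * c) ^ r = Real.exp (-ρ * (v - s)) := by
      rw [rpow_def_of_pos (Real.exp_pos _), Real.log_exp, ← Real.exp_log (Real.exp_pos (-ρ * (v - s))), Real.log_exp]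
      congr 1
      field_simp [hr_def]
      rw [hr_def]
      field_simp
    have hyne' : (1:ℝ) - Real.exp (-ρ * c) ≠ 0 := by linarith
    rw [hu, hu, hpow, div_div_div_cancel_right₀ hρne, div_eq_div_iff hyne' hyne]
    ring
  have hkey₁ := key ρ₁ (h12.trans h2)
  have hkey₂ := key ρ₂ h2
  -- strict convexity secant inequality
  have hy2 : (1:ℝ) < Real.exp (-ρ₂ * c) := by
    have : 0 < -ρ₂ * c := mul_pos (by linarith) hc
    calc (1:ℝ) = Real.exp 0 := by simp
    _ < _ := Real.exp_lt_exp.2 this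
  have hy12 : Real.exp (-ρ₂ * c) < Real.exp (-ρ₁ * c) := by
    apply Real.exp_lt_exp.2
    nlinarith
  have hconv := strictConvexOn_rpow hr
  have hsec := hconv.secant_strict_mono (a := 1) (x := Real.exp (-ρ₂ * c))
      (y := Real.exp (-ρ₁ * c)) (by simp) (le_of_lt (Real.exp_pos _))
      (le_of_lt (Real.exp_pos _)) (by intro h; rw [h] at hy2; exact lt_irrefl _ hy2)
      (by intro h; rw [h] at hy12; linarith) hy12
  simp only [Real.one_rpow] at hsec
  rw [mul_div_assoc, mul_div_assoc, hkey₁, hkey₂]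
  have := mul_lt_mul_of_pos_left hsec hc
  linarith
end
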